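/- Every nonnegative separable polynomial in n real variables can be written as a sum of nonnegative univariate polynomials; more precisely, if p(x) = ∑_{i=1}^n p_i(x_i) satisfies p(x) ≥ 0 for all x ∈ ℝⁿ, then there exist univariate polynomials r_1, …, r_n with r_i(t) ≥ 0 for all t ∈ ℝ and a constant c ≥ 0 such that p(x) = ∑_{i=1}^n r_i(x_i) + c for all x ∈ ℝⁿ. In particular, a separable polynomial is nonnegative if and only if it is a sum of squares of polynomials. -/

import Mathlib

section AuxUniv

lemma sumsq_mul_self_left {R : Type*} [CommRing R] (a : R) {S : R}
    (hS : IsSumSq S) : IsSumSq (a * a * S) := by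
  induction hS with
  | zero => simpa using IsSumSq.zero
  | @sq_add b T hT ih =>
    have h : a * a * (b * b + T) = (a * b) * (a * b) + a * a * T := by ring
    rw [h]; exact IsSumSq.sq_add _ ih

lemma sumsq_mul {R : Type*} [CommRing R] {p q : R} (hp : IsSumSq p)
    (hq : IsSumSq q) : IsSumSq (p * q) := by
  induction hp with
  | zero => simpa using IsSumSq.zero
  | @sq_add a S hS ih =>
    rw [add_mul]
    exact (sumsq_mul_self_left a hq).add ih

lemma sumsq_map {R S : Type*} [CommRing R] [CommRing S] (f : R →+* S) {p : R}
    (h : IsSumSq p) : IsSumSq (f p) := by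
  induction h with
  | zero => simpa using IsSumSq.zero
  | @sq_add a T hT ih => rw [map_add, map_mul]; exact IsSumSq.sq_add _ ih

lemma isSumSq_of_nonneg {c : ℝ} (hc : 0 ≤ c) : IsSumSq c := by
  have h : c = Real.sqrt c * Real.sqrt c + 0 := by
    rw [add_zero, Real.mul_self_sqrt hc]
  rw [h]; exact IsSumSq.sq_add _ IsSumSq.zero

open Polynomial in
lemma nonneg_poly_isSumSq : ∀ (N : ℕ) (p : ℝ[X]), p.natDegree ≤ N →
    (∀ t : ℝ, 0 ≤ p.eval t) → IsSumSq p := by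
  intro N
  induction N using Nat.strong_induction_on with
  | _ N ih =>
  intro p hdeg hnn
  by_cases hp0 : p = 0
  · rw [hp0]; exact IsSumSq.zero
  by_cases hc : p.natDegree = 0
  · have hpc := Polynomial.eq_C_of_natDegree_eq_zero hc
    have hc0 : 0 ≤ p.coeff 0 := by
      rw [Polynomial.coeff_zero_eq_eval_zero]; exact hnn 0
    rw [hpc]
    exact sumsq_map (Polynomial.C (R := ℝ)) (isSumSq_of_nonneg hc0)
  have hkey : ∃ d q : ℝ[X], p = d * q ∧ IsSumSq d ∧ d.natDegree = 2 ∧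
      ∀ t : ℝ, 0 ≤ q.eval t := by
    by_cases hroot : ∃ a : ℝ, p.eval a = 0
    · obtain ⟨a, ha⟩ := hroot
      have hmin : IsLocalMin (fun t => p.eval t) a :=
        Filter.Eventually.of_forall (fun t => by simpa [ha] using hnn t)
      have hder : p.derivative.eval a = 0 := by
        have h := hmin.deriv_eq_zero
        rwa [Polynomial.deriv] at h
      have h2 : 1 < p.rootMultiplicity a := by
        apply lt_rootMultiplicity_of_isRoot_iterate_derivative hp0
        intro m hm
        interval_cases m <;> simpa [Polynomial.IsRoot]
      have hdvd : (X - C a) ^ 2 ∣ p :=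
        dvd_trans (pow_dvd_pow _ h2) (p.pow_rootMultiplicity_dvd a)
      obtain ⟨q, hq⟩ := hdvd
      have hne : ∀ t, t ≠ a → 0 ≤ q.eval t := by
        intro t ht
        have h1 := hnn t
        rw [hq] at h1
        simp only [eval_mul, eval_pow, eval_sub, eval_X, eval_C] at h1
        have hta : (t - a) ≠ 0 := sub_ne_zero.2 ht
        have h2' : 0 < (t - a) ^ 2 :=
          lt_of_le_of_ne (sq_nonneg _) (Ne.symm (pow_ne_zero 2 hta))
        by_contra hcon
        push_neg at hcon
        have := mul_neg_of_pos_of_neg h2' hcon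
        linarith
      refine ⟨(X - C a) ^ 2, q, hq, ?_, ?_, ?_⟩
      · have h : ((X - C a) ^ 2 : ℝ[X]) = (X - C a) * (X - C a) + 0 := by ring
        rw [h]; exact IsSumSq.sq_add _ IsSumSq.zero
      · simp [natDegree_pow]
      · intro t
        rcases eq_or_ne t a with rfl | ht
        · have hcont : ContinuousWithinAt (fun s => q.eval s) {t}ᶜ t :=
            (q.continuous).continuousWithinAt
          refine ge_of_tendsto hcont.tendsto ?_
          filter_upwards [self_mem_nhdsWithin] with s hs using hne s hs
        · exact hne t ht
    · push_neg at hroot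
      have hpos : ∀ t, 0 < p.eval t :=
        fun t => lt_of_le_of_ne (hnn t) (Ne.symm (hroot t))
      have hdeg' : p.degree ≠ 0 := degree_ne_of_natDegree_ne hc
      obtain ⟨z, hz⟩ := IsAlgClosed.exists_aeval_eq_zero ℂ p hdeg'
      have him : z.im ≠ 0 := by
        intro h0
        have hzz : z = (z.re : ℂ) := by
          rw [← Complex.re_add_im z, h0]; simp
        have h2 := aeval_algebraMap_apply_eq_algebraMap_eval z.re p (A := ℂ)
        simp only [Complex.coe_algebraMap] at h2
        rw [hzz, h2] at hz
        exact (hpos z.re).ne' (by exact_mod_cast hz)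
      have hdvd := p.quadratic_dvd_of_aeval_eq_zero_im_ne_zero hz him
      have hnorm : ‖z‖ ^ 2 = z.re ^ 2 + z.im ^ 2 := by
        rw [Complex.sq_norm, Complex.normSq_apply]; ring
      obtain ⟨q, hq⟩ := hdvd
      have him2 : 0 < z.im ^ 2 :=
        lt_of_le_of_ne (sq_nonneg _) (Ne.symm (pow_ne_zero 2 him))
      have hposd : ∀ t : ℝ, 0 < t ^ 2 - 2 * z.re * t + ‖z‖ ^ 2 := by
        intro t
        rw [hnorm]
        nlinarith [sq_nonneg (t - z.re)]
      refine ⟨_, q, hq, ?_, ?_, ?_⟩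
      · rw [hnorm]
        have h : (X ^ 2 - C (2 * z.re) * X + C (z.re ^ 2 + z.im ^ 2) : ℝ[X]) =
            (X - C z.re) * (X - C z.re) + (C z.im * C z.im + 0) := by
          simp only [C_add, C_mul, C_pow, map_ofNat]; ring
        rw [h]
        exact IsSumSq.sq_add _ (IsSumSq.sq_add _ IsSumSq.zero)
      · compute_degree!
      · intro t
        have h1 := hnn t
        rw [hq] at h1
        simp only [eval_mul, eval_add, eval_sub, eval_pow, eval_X, eval_C] at h1
        have h2' := hposd t
        by_contra hcon
        push_neg at hcon
        have := mul_neg_of_pos_of_neg h2' hcon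
        linarith
  obtain ⟨d, q, hpq, hdS, hd2, hqnn⟩ := hkey
  have hd0 : d ≠ 0 := fun h => by simp [h] at hd2
  have hq0 : q ≠ 0 := fun h => hp0 (by rw [hpq, h, mul_zero])
  have hnd : p.natDegree = 2 + q.natDegree := by
    rw [hpq, natDegree_mul hd0 hq0, hd2]
  have hlt : q.natDegree < N := by omega
  have hqS := ih q.natDegree hlt q le_rfl hqnn
  rw [hpq]
  exact sumsq_mul hdS hqS

end AuxUniv

open MvPolynomial

/-- A polynomial is a sum of squares. -/
def IsSOS {σ : Type*} (p : MvPolynomial σ ℝ) : Prop :=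
  ∃ (m : ℕ) (q : Fin m → MvPolynomial σ ℝ), p = ∑ j, q j ^ 2

lemma isSOS_of_isSumSq {σ : Type*} {p : MvPolynomial σ ℝ} (h : IsSumSq p) : IsSOS p := by
  induction h with
  | zero => exact ⟨0, fun _ => 0, by simp⟩
  | @sq_add a S hS ih =>
    obtain ⟨m, q, rfl⟩ := ih
    refine ⟨m + 1, Fin.cons a q, ?_⟩
    rw [Fin.sum_univ_succ]
    simp [sq]

theorem nonneg_separable_decomposition {n : ℕ}
    (p : MvPolynomial (Fin n) ℝ) (ps : Fin n → Polynomial ℝ)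
    (hsep : p = ∑ i, Polynomial.aeval (MvPolynomial.X i) (ps i)) :
    ((∀ x : Fin n → ℝ, 0 ≤ eval x p) →
      ∃ (r : Fin n → Polynomial ℝ) (c : ℝ),
        (∀ i, ∀ t : ℝ, 0 ≤ (r i).eval t) ∧ 0 ≤ c ∧
        p = (∑ i, Polynomial.aeval (MvPolynomial.X i) (r i)) + MvPolynomial.C c)
    ∧ ((∀ x : Fin n → ℝ, 0 ≤ eval x p) ↔ IsSOS p) := by
  have key : ∀ (x : Fin n → ℝ) (g : Polynomial ℝ) (i : Fin n),
      eval x (Polynomial.aeval (X i) g) = g.eval (x i) := by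
    intro x g i
    rw [Polynomial.aeval_def, MvPolynomial.algebraMap_eq, Polynomial.hom_eval₂]
    have h1 : (eval x).comp (MvPolynomial.C (σ := Fin n) (R := ℝ)) = RingHom.id ℝ := by
      ext r; simp
    rw [h1]; simp [Polynomial.eval₂_id]
  have hev : ∀ x : Fin n → ℝ, eval x p = ∑ i, (ps i).eval (x i) := by
    intro x
    rw [hsep, map_sum]
    exact Finset.sum_congr rfl fun i _ => key x (ps i) i
  have part1 : (∀ x : Fin n → ℝ, 0 ≤ eval x p) →
      ∃ (r : Fin n → Polynomial ℝ) (c : ℝ),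
        (∀ i, ∀ t : ℝ, 0 ≤ (r i).eval t) ∧ 0 ≤ c ∧
        p = (∑ i, Polynomial.aeval (MvPolynomial.X i) (r i)) + MvPolynomial.C c := by
    intro hp
    set S := ∑ i, (ps i).eval 0 with hS
    have hlb : ∀ (i : Fin n) (t : ℝ), (ps i).eval 0 - S ≤ (ps i).eval t := by
      intro i t
      have h0 := hp (Function.update (fun _ => (0 : ℝ)) i t)
      rw [hev] at h0
      have hsum : ∑ j, (ps j).eval (Function.update (fun _ => (0 : ℝ)) i t j)
          = (ps i).eval t + ∑ j ∈ Finset.univ.erase i, (ps j).eval 0 := by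
        rw [← Finset.add_sum_erase _ _ (Finset.mem_univ i)]
        congr 1
        · rw [Function.update_self]
        · exact Finset.sum_congr rfl fun j hj => by
            rw [Function.update_of_ne (Finset.ne_of_mem_erase hj)]
      have hS2 : S = (ps i).eval 0 + ∑ j ∈ Finset.univ.erase i, (ps j).eval 0 :=
        (Finset.add_sum_erase _ _ (Finset.mem_univ i)).symm
      rw [hsum] at h0
      linarith
    set cc : Fin n → ℝ := fun i => sInf (Set.range fun t => (ps i).eval t) with hcc
    have hbdd : ∀ i, BddBelow (Set.range fun t => (ps i).eval t) :=
      fun i => ⟨(ps i).eval 0 - S, by rintro y ⟨t, rfl⟩; exact hlb i t⟩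
    have hrne : ∀ i, (Set.range fun t => (ps i).eval t).Nonempty := fun i => ⟨_, 0, rfl⟩
    have hle : ∀ (i : Fin n) (t : ℝ), cc i ≤ (ps i).eval t :=
      fun i t => csInf_le (hbdd i) ⟨t, rfl⟩
    have hcpos : 0 ≤ ∑ i, cc i := by
      by_contra hneg
      push_neg at hneg
      have hn : 0 < n := by
        rcases Nat.eq_zero_or_pos n with h | h
        · subst h; simp at hneg
        · exact h
      have hn' : (0 : ℝ) < n := by exact_mod_cast hn
      set ε : ℝ := -(∑ i, cc i) / n with hε
      have hεpos : 0 < ε := div_pos (by linarith) hn'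
      have hex : ∀ i, ∃ t : ℝ, (ps i).eval t < cc i + ε := by
        intro i
        obtain ⟨y, ⟨t, rfl⟩, hy⟩ := Real.lt_sInf_add_pos (hrne i) hεpos
        exact ⟨t, hy⟩
      choose t ht using hex
      have h0 := hp t
      rw [hev] at h0
      have : Nonempty (Fin n) := ⟨⟨0, hn⟩⟩
      have huniv : (Finset.univ : Finset (Fin n)).Nonempty := Finset.univ_nonempty
      have hlt : ∑ i, (ps i).eval (t i) < ∑ i, (cc i + ε) :=
        Finset.sum_lt_sum_of_nonempty huniv fun i _ => ht i
      have hsum2 : ∑ i, (cc i + ε) = ∑ i, cc i + n * ε := by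
        rw [Finset.sum_add_distrib, Finset.sum_const, Finset.card_univ, Fintype.card_fin,
          nsmul_eq_mul]
      have hnε : (n : ℝ) * ε = -(∑ i, cc i) := by
        rw [hε]; field_simp
      rw [hsum2, hnε] at hlt
      linarith
    refine ⟨fun i => ps i - Polynomial.C (cc i), ∑ i, cc i, ?_, hcpos, ?_⟩
    · intro i t
      simp only [Polynomial.eval_sub, Polynomial.eval_C, sub_nonneg]
      exact hle i t
    · rw [hsep]
      have h : ∀ i, Polynomial.aeval (X i) (ps i) =
          Polynomial.aeval (X i) (ps i - Polynomial.C (cc i)) + MvPolynomial.C (cc i) := by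
        intro i
        rw [map_sub, Polynomial.aeval_C, MvPolynomial.algebraMap_eq]
        ring
      rw [Finset.sum_congr rfl fun i _ => h i, Finset.sum_add_distrib]
      congr 1
      rw [map_sum]
  refine ⟨part1, ?_, ?_⟩
  · intro hp
    obtain ⟨r, c, hr, hc, heq⟩ := part1 hp
    apply isSOS_of_isSumSq
    rw [heq]
    apply IsSumSq.add
    · refine Finset.sum_induction _ IsSumSq (fun a b ha hb => ha.add hb) IsSumSq.zero ?_
      intro i _
      have h := nonneg_poly_isSumSq (r i).natDegree (r i) le_rfl (hr i)
      exact sumsq_map ((Polynomial.aeval (X i : MvPolynomial (Fin n) ℝ)).toRingHom) h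
    · exact sumsq_map (MvPolynomial.C : ℝ →+* MvPolynomial (Fin n) ℝ) (isSumSq_of_nonneg hc)
  · rintro ⟨m, q, hq⟩ x
    rw [hq, map_sum]
    apply Finset.sum_nonneg
    intro j _
    rw [map_pow]
    exact sq_nonneg _
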